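/- There is no pair (m,n) of positive natural numbers for which (1/2)(-1 + (5m^2 + n^2) + 2(m^2+n^2)^2 - sqrt(1 + 2(m^2+n^2) + (m^2+n^2)^2 + 32 m^2 (m^2+n^2)^2)) is negative. Consequently f(1) = 0. -/
import Mathlib

lemma key_ineq (m n : ℕ) (hm : 0 < m) (hn : 0 < n) :
    Real.sqrt (1 + 2*((m:ℝ)^2+(n:ℝ)^2) + ((m:ℝ)^2+(n:ℝ)^2)^2
        + 32*(m:ℝ)^2*((m:ℝ)^2+(n:ℝ)^2)^2)
      ≤ -1 + (5*(m:ℝ)^2 + (n:ℝ)^2) + 2*((m:ℝ)^2+(n:ℝ)^2)^2 := by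
  have hm1 : (1:ℝ) ≤ (m:ℝ) := by exact_mod_cast hm
  have hn1 : (1:ℝ) ≤ (n:ℝ) := by exact_mod_cast hn
  have hB : (0:ℝ) ≤ -1 + (5*(m:ℝ)^2 + (n:ℝ)^2) + 2*((m:ℝ)^2+(n:ℝ)^2)^2 := by nlinarith
  rw [show (-1 + (5*(m:ℝ)^2 + (n:ℝ)^2) + 2*((m:ℝ)^2+(n:ℝ)^2)^2)
      = Real.sqrt ((-1 + (5*(m:ℝ)^2 + (n:ℝ)^2) + 2*((m:ℝ)^2+(n:ℝ)^2)^2)^2) from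
      (Real.sqrt_sq hB).symm]
  apply Real.sqrt_le_sqrt
  nlinarith [sq_nonneg ((m:ℝ)^2-1), sq_nonneg ((m:ℝ)^2+(n:ℝ)^2-2), sq_nonneg ((m:ℝ)*(n:ℝ)),
    sq_nonneg ((m:ℝ)^2*(n:ℝ)^2 - 1), mul_pos (mul_pos (by positivity : (0:ℝ) < (m:ℝ)^2) (by positivity : (0:ℝ) < (n:ℝ)^2)) (by positivity : (0:ℝ) < (m:ℝ)^2+(n:ℝ)^2)]

theorem stmt_4 :
    (¬ ∃ m n : ℕ, 0 < m ∧ 0 < n ∧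
      (1/2 : ℝ) * (-1 + (5*(m:ℝ)^2 + (n:ℝ)^2) + 2*((m:ℝ)^2+(n:ℝ)^2)^2
        - Real.sqrt (1 + 2*((m:ℝ)^2+(n:ℝ)^2) + ((m:ℝ)^2+(n:ℝ)^2)^2
            + 32*(m:ℝ)^2*((m:ℝ)^2+(n:ℝ)^2)^2)) < 0) ∧
    {p : ℕ × ℕ | 0 < p.1 ∧ 0 < p.2 ∧
      (1/2 : ℝ) * (-1 + (5*(p.1:ℝ)^2 + (p.2:ℝ)^2) + 2*((p.1:ℝ)^2+(p.2:ℝ)^2)^2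
        - Real.sqrt (1 + 2*((p.1:ℝ)^2+(p.2:ℝ)^2) + ((p.1:ℝ)^2+(p.2:ℝ)^2)^2
            + 32*(p.1:ℝ)^2*((p.1:ℝ)^2+(p.2:ℝ)^2)^2)) < 0}.ncard = 0 := by
  constructor
  · rintro ⟨m, n, hm, hn, h⟩
    have := key_ineq m n hm hn
    nlinarith
  · have hempty : ∀ p : ℕ × ℕ, p ∉ {p : ℕ × ℕ | 0 < p.1 ∧ 0 < p.2 ∧
      (1/2 : ℝ) * (-1 + (5*(p.1:ℝ)^2 + (p.2:ℝ)^2) + 2*((p.1:ℝ)^2+(p.2:ℝ)^2)^2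
        - Real.sqrt (1 + 2*((p.1:ℝ)^2+(p.2:ℝ)^2) + ((p.1:ℝ)^2+(p.2:ℝ)^2)^2
            + 32*(p.1:ℝ)^2*((p.1:ℝ)^2+(p.2:ℝ)^2)^2)) < 0} := by
      rintro ⟨m, n⟩ ⟨hm, hn, h⟩
      have := key_ineq m n hm hn
      simp only at h
      nlinarith
    rw [Set.eq_empty_iff_forall_notMem.mpr hempty, Set.ncard_empty]
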